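/- Let a_r, a_s be unit vectors in ℝⁿ with μ = ⟨a_r, a_s⟩, |μ| < 1, v = (a_r − μ a_s)/√(1−μ²), γ = √(1−μ²). Let x, x₀ ∈ ℝⁿ with ⟨a_r, x⟩ = b_r and ⟨a_s, x⟩ = b_s. Define z = x₀ + (b_r − ⟨x₀, a_r⟩)a_r and z' = z + (b_s − ⟨z, a_s⟩)a_s (two sequential standard Kaczmarz steps). Then ‖x − z'‖₂² = ‖x − x₀‖₂² − ⟨x − x₀, a_s⟩² − ⟨x − x₀, v⟩² + (μ²⟨x − x₀, v⟩ − γμ⟨x − x₀, a_s⟩)². -/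
import Mathlib


open scoped RealInnerProductSpace

theorem stmt14 {n : ℕ} (ar as : EuclideanSpace ℝ (Fin n))
    (har : ‖ar‖ = 1) (has : ‖as‖ = 1)
    (μ : ℝ) (hμ : μ = ⟪ar, as⟫) (hcoh : |μ| < 1)
    (v : EuclideanSpace ℝ (Fin n))
    (hv : v = (Real.sqrt (1 - μ ^ 2))⁻¹ • (ar - μ • as))
    (γ : ℝ) (hγ : γ = Real.sqrt (1 - μ ^ 2))
    (x x₀ : EuclideanSpace ℝ (Fin n)) (br bs : ℝ)
    (hbr : ⟪ar, x⟫ = br) (hbs : ⟪as, x⟫ = bs)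
    (z z' : EuclideanSpace ℝ (Fin n))
    (hz : z = x₀ + (br - ⟪x₀, ar⟫) • ar)
    (hz' : z' = z + (bs - ⟪z, as⟫) • as) :
    ‖x - z'‖ ^ 2 = ‖x - x₀‖ ^ 2 - ⟪x - x₀, as⟫ ^ 2 - ⟪x - x₀, v⟫ ^ 2 +
      (μ ^ 2 * ⟪x - x₀, v⟫ - γ * μ * ⟪x - x₀, as⟫) ^ 2 := by
  have hμ2 : μ ^ 2 < 1 := by
    have := abs_lt.mp hcoh
    nlinarith [sq_abs μ]
  have hpos : (0:ℝ) < 1 - μ ^ 2 := by linarith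
  have hγpos : 0 < γ := by rw [hγ]; exact Real.sqrt_pos.mpr hpos
  have hγ2 : γ ^ 2 = 1 - μ ^ 2 := by rw [hγ]; exact Real.sq_sqrt hpos.le
  have har' : ar = μ • as + γ • v := by
    rw [hv, ← hγ, smul_inv_smul₀ hγpos.ne']
    abel
  set α := ⟪x - x₀, as⟫ with hα
  set β := ⟪x - x₀, v⟫ with hβ
  have hc : ⟪ar, x - x₀⟫ = μ * α + γ * β := by
    conv_lhs => rw [har']
    rw [inner_add_left, real_inner_smul_left, real_inner_smul_left, hα, hβ,
      real_inner_comm (x - x₀) as, real_inner_comm (x - x₀) v]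
  have hxz : x - z = (x - x₀) - ⟪ar, x - x₀⟫ • ar := by
    rw [hz]
    have h1 : br - ⟪x₀, ar⟫ = ⟪ar, x - x₀⟫ := by
      rw [inner_sub_right, hbr, real_inner_comm x₀ ar]
    rw [h1]; abel
  have hd : ⟪as, x - z⟫ = α - (μ * α + γ * β) * μ := by
    rw [hxz, inner_sub_right, real_inner_smul_right, hc, hα,
      real_inner_comm (x - x₀) as, real_inner_comm ar as, ← hμ]
  have hxz' : x - z' = (x - z) - ⟪as, x - z⟫ • as := by
    rw [hz']
    have h1 : bs - ⟪z, as⟫ = ⟪as, x - z⟫ := by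
      rw [inner_sub_right, hbs, real_inner_comm z as]
    rw [h1]; abel
  have key : ∀ (w u : EuclideanSpace ℝ (Fin n)), ‖u‖ = 1 →
      ‖w - ⟪u, w⟫ • u‖ ^ 2 = ‖w‖ ^ 2 - ⟪u, w⟫ ^ 2 := by
    intro w u hu
    rw [norm_sub_sq_real, real_inner_smul_right, norm_smul, real_inner_comm w u]
    simp [hu, mul_pow]
    ring
  have h1 : ‖x - z'‖ ^ 2 = ‖x - z‖ ^ 2 - ⟪as, x - z⟫ ^ 2 := by
    rw [hxz']; exact key _ _ has
  have h2 : ‖x - z‖ ^ 2 = ‖x - x₀‖ ^ 2 - ⟪ar, x - x₀⟫ ^ 2 := by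
    rw [hxz]; exact key _ _ har
  rw [h1, h2, hd, hc]
  linear_combination (-(μ^2 * α^2) - (1 + μ^2) * β^2) * hγ2
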